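/- In the cut-matching potential decrease argument: if n' ≥ 18 vertex-disjoint mappings σ_1, …, σ_{n'/18} from S to S' are extracted from a matching saturating S_X (each part containing at least n'/18 matched vertices), and each σ_j satisfies Σ_{a∈S} ‖R_{i−1}[a] − R_{i−1}[σ_j(a)]‖² ≥ (1/720)·Π(i−1), then Σ_{a∈S}Σ_{b∈S'} (m_{ab}/2)‖R_{i−1}[a] − R_{i−1}[b]‖² ≥ (1/(2n')) · (n'/18) · (1/720) · Π(i−1) = Π(i−1)/(2·18·720). -/

import Mathlib

open Finset

/-- Suppose `J ≥ n'/18` mappings `σ_1, …, σ_J` from `S` to `S'` are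
extracted from a matching saturating `S_X`, so that the natural fractional matching values
satisfy `m_{ab} ≥ |{j : σ_j(a) = b}|/n'`, and each mapping satisfies
`Σ_{a∈S} ‖R[a] − R[σ_j(a)]‖² ≥ (1/720)·Π`. Then
`Σ_{a∈S} Σ_{b∈S'} (m_{ab}/2)·‖R[a] − R[b]‖² ≥ Π/(2·18·720)`. -/
theorem fractional_matching_potential_bound
    (t n' J : ℕ) (hn' : 0 < n') (hJ : (n' : ℝ) / 18 ≤ (J : ℝ))
    (R : Fin t → Fin t → ℝ) (S S' : Finset (Fin t))
    (m : Fin t → Fin t → ℝ)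
    (σ : Fin J → Fin t → Fin t)
    (hσ : ∀ (j : Fin J), ∀ a ∈ S, σ j a ∈ S')
    (Pot : ℝ)
    (hpot : ∀ j : Fin J, Pot / 720 ≤ ∑ a ∈ S, ∑ x, (R a x - R (σ j a) x) ^ 2)
    (hm : ∀ a ∈ S, ∀ b ∈ S',
      ((Finset.univ.filter fun j : Fin J => σ j a = b).card : ℝ) / n' ≤ m a b) :
    Pot / (2 * 18 * 720) ≤
      ∑ a ∈ S, ∑ b ∈ S', (m a b / 2) * ∑ x, (R a x - R b x) ^ 2 := by
  have hn'R : (0:ℝ) < (n' : ℝ) := by exact_mod_cast hn'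
  have hdnn : ∀ a b : Fin t, (0:ℝ) ≤ ∑ x, (R a x - R b x) ^ 2 := fun a b =>
    Finset.sum_nonneg fun x _ => sq_nonneg _
  by_cases hPot : 0 ≤ Pot
  · -- key fiberwise identity
    have key : ∀ a ∈ S,
        ∑ b ∈ S', ((Finset.univ.filter fun j : Fin J => σ j a = b).card : ℝ) *
          (∑ x, (R a x - R b x) ^ 2)
        = ∑ j : Fin J, ∑ x, (R a x - R (σ j a) x) ^ 2 := by
      intro a ha
      rw [← Finset.sum_fiberwise_of_maps_to (g := fun j => σ j a)
        (fun j _ => hσ j a ha) (fun j => ∑ x, (R a x - R (σ j a) x) ^ 2)]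
      refine Finset.sum_congr rfl fun b hb => ?_
      exact ((Finset.sum_congr rfl fun j hj => by
        rw [(Finset.mem_filter.1 hj).2]).trans
        (by rw [Finset.sum_const, nsmul_eq_mul])).symm
    have step1 : ∑ a ∈ S, ∑ b ∈ S',
        (((Finset.univ.filter fun j : Fin J => σ j a = b).card : ℝ) / n' / 2) *
          (∑ x, (R a x - R b x) ^ 2)
        ≤ ∑ a ∈ S, ∑ b ∈ S', (m a b / 2) * ∑ x, (R a x - R b x) ^ 2 := by
      refine Finset.sum_le_sum fun a ha => Finset.sum_le_sum fun b hb => ?_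
      exact mul_le_mul_of_nonneg_right
        (div_le_div_of_nonneg_right (hm a ha b hb) (by norm_num)) (hdnn a b)
    have step2 : ∑ a ∈ S, ∑ b ∈ S',
        (((Finset.univ.filter fun j : Fin J => σ j a = b).card : ℝ) / n' / 2) *
          (∑ x, (R a x - R b x) ^ 2)
        = (1 / (2 * n')) * ∑ j : Fin J, ∑ a ∈ S, ∑ x, (R a x - R (σ j a) x) ^ 2 := by
      have hrow : ∀ a ∈ S, ∑ b ∈ S',
          (((Finset.univ.filter fun j : Fin J => σ j a = b).card : ℝ) / n' / 2) *
            (∑ x, (R a x - R b x) ^ 2)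
          = (1 / (2 * n')) * ∑ j : Fin J, ∑ x, (R a x - R (σ j a) x) ^ 2 := by
        intro a ha
        rw [← key a ha, Finset.mul_sum]
        exact Finset.sum_congr rfl fun b _ => by ring
      rw [Finset.sum_congr rfl hrow, ← Finset.mul_sum, Finset.sum_comm]
    have step3 : (J : ℝ) * (Pot / 720) ≤
        ∑ j : Fin J, ∑ a ∈ S, ∑ x, (R a x - R (σ j a) x) ^ 2 := by
      calc (J : ℝ) * (Pot / 720) = ∑ _j : Fin J, Pot / 720 := by
            rw [Finset.sum_const, Finset.card_univ, Fintype.card_fin, nsmul_eq_mul]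
        _ ≤ _ := Finset.sum_le_sum fun j _ => hpot j
    have step4 : Pot / (2 * 18 * 720) ≤
        (1 / (2 * n')) * ∑ j : Fin J, ∑ a ∈ S, ∑ x, (R a x - R (σ j a) x) ^ 2 := by
      have h0 : (0:ℝ) ≤ 1 / (2 * n') := by positivity
      calc Pot / (2 * 18 * 720) = (1 / (2 * n')) * ((n' : ℝ) / 18 * (Pot / 720)) := by
            field_simp
        _ ≤ (1 / (2 * n')) * ((J : ℝ) * (Pot / 720)) :=
            mul_le_mul_of_nonneg_left
              (mul_le_mul_of_nonneg_right hJ (by positivity)) h0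
        _ ≤ _ := mul_le_mul_of_nonneg_left step3 h0
    calc Pot / (2 * 18 * 720) ≤ _ := step4
      _ = _ := step2.symm
      _ ≤ _ := step1
  · refine le_trans ?_ (Finset.sum_nonneg fun a ha => Finset.sum_nonneg fun b hb =>
      mul_nonneg (by
        have := hm a ha b hb
        have h0 : (0:ℝ) ≤ ((Finset.univ.filter fun j : Fin J => σ j a = b).card : ℝ) / n' :=
          div_nonneg (Nat.cast_nonneg _) (le_of_lt hn'R)
        linarith) (hdnn a b))
    have : Pot < 0 := lt_of_not_ge hPot
    nlinarith
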